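/- Let F be the free group on x_1,...,x_{n+1}, g_k : F → Z/k sending each generator to 1, F^{(k)} = ker(g_k). Then the normal closure in F of the set {x_i^k : 1 ≤ i ≤ n+1} is contained in F^{(k)}, and the quotient of F^{(k)} by this normal closure admits the presentation ⟨ x_{n+1}^k, τ^j(y_i) (1 ≤ i ≤ n, 0 ≤ j ≤ k-1) | x_{n+1}^k, y_i τ(y_i)⋯τ^{k-1}(y_i) (1 ≤ i ≤ n) ⟩, which is free of rank n(k-1) on the generators τ^j(y_i), 0 ≤ j ≤ k-2. -/

import Mathlib

def gk (n k : ℕ) : FreeGroup (Fin (n + 1)) →* Multiplicative (ZMod k) :=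
  FreeGroup.lift fun _ => Multiplicative.ofAdd (1 : ZMod k)

def xlast (n : ℕ) : FreeGroup (Fin (n + 1)) := FreeGroup.of (Fin.last n)

def tau (n : ℕ) (w : FreeGroup (Fin (n + 1))) : FreeGroup (Fin (n + 1)) :=
  xlast n * w * (xlast n)⁻¹

def yy (n : ℕ) (i : Fin n) : FreeGroup (Fin (n + 1)) :=
  FreeGroup.of i.castSucc * (xlast n)⁻¹

/-- The normal closure in `F` of the set `{x_i^k : 1 ≤ i ≤ n+1}`. -/
def NF (n k : ℕ) : Subgroup (FreeGroup (Fin (n + 1))) :=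
  Subgroup.normalClosure {w | ∃ i : Fin (n + 1), w = FreeGroup.of i ^ k}

instance (n k : ℕ) : ((NF n k).subgroupOf (MonoidHom.ker (gk n k))).Normal :=
  Subgroup.Normal.subgroupOf Subgroup.normalClosure_normal _

/-- The relators `x_{n+1}^k` and `y_i τ(y_i) ⋯ τ^{k-1}(y_i)` (for `1 ≤ i ≤ n`),
written in the generators `x_{n+1}^k` (index `none`) and `τ^j(y_i)` (index `(i,j)`). -/
def quotRels (n k : ℕ) : Set (FreeGroup (Option (Fin n × Fin k))) :=
  {FreeGroup.of none} ∪
    {w | ∃ i : Fin n,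
      w = ((List.finRange k).map fun j => FreeGroup.of (some (i, j))).prod}

namespace RS16
open FreeGroup Subgroup Multiplicative

variable (n k : ℕ)

abbrev FH := FreeGroup (Option (Fin n × Fin k))

section arith
variable [NeZero k]
set_option linter.unusedSectionVars false

lemma val_cast (a : ZMod k) : ((a.val : ℕ) : ZMod k) = a := ZMod.natCast_rightInverse a

lemma cast_eq_neg_one_iff {m : ℕ} (hm : m < k) : ((m : ZMod k) = -1) ↔ m + 1 = k := by
  constructor
  · intro h
    have h0 : ((m + 1 : ℕ) : ZMod k) = 0 := by push_cast [h]; ring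
    have hdvd : k ∣ m + 1 := (ZMod.natCast_eq_zero_iff _ _).mp h0
    exact Nat.le_antisymm (Nat.succ_le_of_lt hm) (Nat.le_of_dvd (Nat.succ_pos m) hdvd)
  · intro h
    have : ((m : ZMod k)) + 1 = 0 := by
      have : ((m + 1 : ℕ) : ZMod k) = 0 := by rw [h]; exact ZMod.natCast_self k
      push_cast at this; exact this
    exact eq_neg_of_add_eq_zero_left this

lemma val_add_one_of_ne {a : ZMod k} (h : a ≠ -1) : (a + 1).val = a.val + 1 := by
  have hlt : a.val + 1 < k := by
    rcases lt_or_eq_of_le (Nat.succ_le_of_lt a.val_lt) with h' | h'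
    · exact h'
    · exact absurd (by rw [← val_cast k a]; exact (cast_eq_neg_one_iff k a.val_lt).mpr h') h
  have : a + 1 = ((a.val + 1 : ℕ) : ZMod k) := by rw [Nat.cast_add, Nat.cast_one, val_cast]
  rw [this, ZMod.val_cast_of_lt hlt]

lemma val_add_one_of_eq {a : ZMod k} (h : a = -1) : a.val + 1 = k := by
  have hk : 0 < k := Nat.pos_of_ne_zero (NeZero.ne k)
  have h1 : ((k - 1 : ℕ) : ZMod k) = -1 :=
    (cast_eq_neg_one_iff k (Nat.sub_lt hk Nat.one_pos)).mpr (Nat.succ_pred_eq_of_pos hk)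
  have : a.val = k - 1 := by rw [h, ← h1, ZMod.val_cast_of_lt (Nat.sub_lt hk Nat.one_pos)]
  rw [this]; exact Nat.succ_pred_eq_of_pos hk

end arith

/-! ### basic lemmas about `gk`, `tau`, `yy` -/

lemma gk_of (x : Fin (n + 1)) : gk n k (FreeGroup.of x) = ofAdd (1 : ZMod k) :=
  FreeGroup.lift_apply_of

lemma gk_xlast_pow (m : ℕ) : gk n k (xlast n ^ m) = ofAdd ((m : ℕ) : ZMod k) := by
  rw [map_pow, xlast, gk_of, ← ofAdd_nsmul]
  congr 1
  simp [nsmul_eq_mul]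

lemma gk_of_pow (x : Fin (n + 1)) (m : ℕ) :
    gk n k (FreeGroup.of x ^ m) = ofAdd ((m : ℕ) : ZMod k) := by
  rw [map_pow, gk_of, ← ofAdd_nsmul]
  congr 1
  simp [nsmul_eq_mul]

lemma gk_tau (w : FreeGroup (Fin (n + 1))) : gk n k (tau n w) = gk n k w := by
  rw [tau, MonoidHom.map_mul, MonoidHom.map_mul, MonoidHom.map_inv, mul_comm ((gk n k) (xlast n)), mul_assoc,
    mul_inv_cancel, mul_one]

lemma gk_tau_iter (m : ℕ) (w : FreeGroup (Fin (n + 1))) :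
    gk n k ((tau n)^[m] w) = gk n k w := by
  induction m with
  | zero => rfl
  | succ m ih => rw [Function.iterate_succ_apply', gk_tau, ih]

lemma gk_yy (i : Fin n) : gk n k (yy n i) = 1 := by
  rw [yy, MonoidHom.map_mul, MonoidHom.map_inv, xlast, gk_of, gk_of, mul_inv_cancel]

lemma tau_iter (m : ℕ) (i : Fin n) :
    (tau n)^[m] (yy n i) =
      xlast n ^ m * FreeGroup.of i.castSucc * (xlast n ^ (m + 1))⁻¹ := by
  induction m with
  | zero => simp [yy]
  | succ m ih =>
    rw [Function.iterate_succ_apply', ih, tau]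
    group

lemma tau_eq_conj (z : FreeGroup (Fin (n + 1))) :
    tau n z = MulAut.conj (xlast n) z := rfl

/-! ### the wreath-type homomorphism -/

section wreath
variable [NeZero k]
set_option linter.unusedSectionVars false

def shiftA : Multiplicative (ZMod k) →* MulAut (ZMod k → FH n k) where
  toFun g :=
    { toFun := fun f x => f (x + toAdd g)
      invFun := fun f x => f (x - toAdd g)
      left_inv := fun f => funext fun x => by simp
      right_inv := fun f => funext fun x => by simp
      map_mul' := fun f f' => rfl }
  map_one' := by
    refine MulEquiv.ext fun f => funext fun x => ?_
    simp
  map_mul' := fun g h => by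
    refine MulEquiv.ext fun f => funext fun x => ?_
    show f (x + toAdd (g * h)) = f (x + toAdd g + toAdd h)
    rw [toAdd_mul, add_assoc]

lemma shiftA_apply (g : Multiplicative (ZMod k)) (f : ZMod k → FH n k) (x : ZMod k) :
    shiftA n k g f x = f (x + toAdd g) := rfl

def fgen (x : Fin (n + 1)) (a : ZMod k) : FH n k :=
  (if h : (x : ℕ) < n then FreeGroup.of (some (⟨(x : ℕ), h⟩, ⟨a.val, a.val_lt⟩)) else 1) *
    (if a = -1 then FreeGroup.of none else 1)

def Phi : FreeGroup (Fin (n + 1)) →* (ZMod k → FH n k) ⋊[shiftA n k] Multiplicative (ZMod k) :=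
  FreeGroup.lift fun x => ⟨fgen n k x, ofAdd (1 : ZMod k)⟩

lemma Phi_of (x : Fin (n + 1)) :
    Phi n k (FreeGroup.of x) = ⟨fgen n k x, ofAdd (1 : ZMod k)⟩ :=
  FreeGroup.lift_apply_of

lemma Phi_right (w : FreeGroup (Fin (n + 1))) : (Phi n k w).right = gk n k w := by
  have : SemidirectProduct.rightHom.comp (Phi n k) = gk n k := by
    refine FreeGroup.ext_hom _ _ fun a => ?_
    rw [MonoidHom.comp_apply, Phi_of, gk_of]
    rfl
  exact congrFun (congrArg (fun f => f.toFun) this) w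

lemma Phi_left_mul (w v : FreeGroup (Fin (n + 1))) (a : ZMod k) :
    (Phi n k (w * v)).left a =
      (Phi n k w).left a * (Phi n k v).left (a + toAdd (gk n k w)) := by
  rw [MonoidHom.map_mul, SemidirectProduct.mul_left, Pi.mul_apply, shiftA_apply, Phi_right]

lemma Phi_left_inv (w : FreeGroup (Fin (n + 1))) (a : ZMod k) :
    (Phi n k w⁻¹).left a = ((Phi n k w).left (a - toAdd (gk n k w)))⁻¹ := by
  rw [MonoidHom.map_inv, SemidirectProduct.inv_left, shiftA_apply, Pi.inv_apply, toAdd_inv,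
    Phi_right, ← sub_eq_add_neg]

def phi : FH n k →* FreeGroup (Fin (n + 1)) :=
  FreeGroup.lift fun o => match o with
    | none => xlast n ^ k
    | some (i, j) => (tau n)^[(j : ℕ)] (yy n i)

lemma phi_of_none : phi n k (FreeGroup.of none) = xlast n ^ k := FreeGroup.lift_apply_of

lemma phi_of_some (i : Fin n) (j : Fin k) :
    phi n k (FreeGroup.of (some (i, j))) = (tau n)^[(j : ℕ)] (yy n i) := FreeGroup.lift_apply_of

lemma gk_phi (h : FH n k) : gk n k (phi n k h) = 1 := by
  have : (gk n k).comp (phi n k) = 1 := by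
    refine FreeGroup.ext_hom _ _ fun o => ?_
    rcases o with _ | ⟨i, j⟩
    · rw [MonoidHom.comp_apply, phi_of_none, gk_xlast_pow]
      simp [ZMod.natCast_self]
    · rw [MonoidHom.comp_apply, phi_of_some, gk_tau_iter, gk_yy]
      rfl
  exact congrFun (congrArg (fun f => f.toFun) this) h

lemma main_of (x : Fin (n + 1)) (a : ZMod k) :
    phi n k ((Phi n k (FreeGroup.of x)).left a) *
      xlast n ^ (a + toAdd (gk n k (FreeGroup.of x))).val =
      xlast n ^ a.val * FreeGroup.of x := by
  rw [Phi_of, gk_of, toAdd_ofAdd]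
  show phi n k (fgen n k x a) * xlast n ^ (a + 1).val = xlast n ^ a.val * FreeGroup.of x
  by_cases hx : (x : ℕ) < n
  · have hc : (Fin.castSucc ⟨(x : ℕ), hx⟩ : Fin (n + 1)) = x := Fin.ext rfl
    by_cases ha : a = -1
    · have hav : a.val + 1 = k := val_add_one_of_eq k ha
      have ha1 : (a + 1).val = 0 := by rw [ha, neg_add_cancel, ZMod.val_zero]
      simp only [fgen, dif_pos hx, if_pos ha]
      rw [MonoidHom.map_mul, phi_of_some, phi_of_none, tau_iter]
      simp only [Fin.val_mk]
      rw [hc, ha1, pow_zero, mul_one, hav]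
      group
    · have ha1 : (a + 1).val = a.val + 1 := val_add_one_of_ne k ha
      simp only [fgen, dif_pos hx, if_neg ha, mul_one]
      rw [phi_of_some, tau_iter]
      simp only [Fin.val_mk]
      rw [hc, ha1]
      group
  · have hxl : x = Fin.last n := by
      refine Fin.ext ?_
      have := x.isLt
      simp only [Fin.val_last]
      omega
    by_cases ha : a = -1
    · have hav : a.val + 1 = k := val_add_one_of_eq k ha
      have ha1 : (a + 1).val = 0 := by rw [ha, neg_add_cancel, ZMod.val_zero]
      simp only [fgen, dif_neg hx, if_pos ha, one_mul]
      rw [phi_of_none, ha1, pow_zero, mul_one, hxl,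
        show xlast n ^ k = xlast n ^ (a.val + 1) from by rw [hav], pow_succ, xlast]
    · have ha1 : (a + 1).val = a.val + 1 := val_add_one_of_ne k ha
      simp only [fgen, dif_neg hx, if_neg ha, mul_one]
      rw [MonoidHom.map_one, one_mul, ha1, hxl, pow_succ, xlast]

lemma main_inv (w : FreeGroup (Fin (n + 1)))
    (hw : ∀ a : ZMod k, phi n k ((Phi n k w).left a) *
      xlast n ^ (a + toAdd (gk n k w)).val = xlast n ^ a.val * w) (a : ZMod k) :
    phi n k ((Phi n k w⁻¹).left a) * xlast n ^ (a + toAdd (gk n k w⁻¹)).val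
      = xlast n ^ a.val * w⁻¹ := by
  have h1 := hw (a - toAdd (gk n k w))
  rw [sub_add_cancel] at h1
  rw [Phi_left_inv, MonoidHom.map_inv, MonoidHom.map_inv, toAdd_inv, ← sub_eq_add_neg]
  have h3 : phi n k ((Phi n k w).left (a - toAdd (gk n k w)))
      = xlast n ^ (a - toAdd (gk n k w)).val * w * (xlast n ^ a.val)⁻¹ := by
    rw [← h1]; group
  rw [h3]; group

lemma main (w : FreeGroup (Fin (n + 1))) (a : ZMod k) :
    phi n k ((Phi n k w).left a) * xlast n ^ (a + toAdd (gk n k w)).val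
      = xlast n ^ a.val * w := by
  induction w using FreeGroup.induction_on generalizing a with
  | C1 => simp
  | of x => exact main_of n k x a
  | inv_of x hx => exact main_inv n k _ hx a
  | mul w v hw hv =>
    rw [Phi_left_mul, MonoidHom.map_mul, MonoidHom.map_mul, toAdd_mul, ← add_assoc,
      mul_assoc, hv, ← mul_assoc, hw, mul_assoc]

def phiK : FH n k →* MonoidHom.ker (gk n k) :=
  (phi n k).codRestrict _ fun h => gk_phi n k h

lemma phiK_coe (h : FH n k) : ((phiK n k h : MonoidHom.ker (gk n k)) : FreeGroup (Fin (n + 1))) = phi n k h := rfl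

def rho : MonoidHom.ker (gk n k) →* FH n k where
  toFun w := (Phi n k w.1).left 0
  map_one' := by simp
  map_mul' := fun w v => by
    show (Phi n k (w.1 * v.1)).left 0 = _
    rw [Phi_left_mul, MonoidHom.mem_ker.mp w.2, toAdd_one, add_zero]

lemma phiK_rho (w : MonoidHom.ker (gk n k)) : phiK n k (rho n k w) = w := by
  refine Subtype.ext ?_
  rw [phiK_coe]
  have h := main n k w.1 0
  rw [MonoidHom.mem_ker.mp w.2, toAdd_one, add_zero, ZMod.val_zero, pow_zero, one_mul,
    mul_one] at h
  exact h

lemma left_xlast_pow (m : ℕ) (hm : m ≤ k) :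
    (Phi n k (xlast n ^ m)).left 0 = if m = k then FreeGroup.of none else 1 := by
  induction m with
  | zero =>
    rw [pow_zero, MonoidHom.map_one, if_neg (Nat.pos_of_ne_zero (NeZero.ne k)).ne]
    rfl
  | succ m ih =>
    have hmk : m < k := Nat.lt_of_succ_le hm
    rw [pow_succ, Phi_left_mul, ih hmk.le, if_neg hmk.ne, one_mul, gk_xlast_pow, toAdd_ofAdd,
      zero_add, xlast, Phi_of]
    show fgen n k (Fin.last n) ((m : ℕ) : ZMod k) = _
    have hlast : ¬ ((Fin.last n : Fin (n + 1)) : ℕ) < n := by simp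
    simp only [fgen, dif_neg hlast, one_mul]
    by_cases h : ((m : ℕ) : ZMod k) = -1
    · rw [if_pos h, if_pos ((cast_eq_neg_one_iff k hmk).mp h)]
    · rw [if_neg h, if_neg fun hc => h (((cast_eq_neg_one_iff k hmk)).mpr hc)]

lemma rho_phiK_of (o : Option (Fin n × Fin k)) :
    rho n k (phiK n k (FreeGroup.of o)) = FreeGroup.of o := by
  rcases o with _ | ⟨i, j⟩
  · show (Phi n k (phi n k (FreeGroup.of none))).left 0 = _
    rw [phi_of_none, left_xlast_pow n k k le_rfl, if_pos rfl]
  · show (Phi n k (phi n k (FreeGroup.of (some (i, j))))).left 0 = _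
    rw [phi_of_some, tau_iter]
    have hj1 : (j : ℕ) + 1 ≤ k := j.isLt
    have hgA : toAdd (gk n k (xlast n ^ (j : ℕ))) = ((j : ℕ) : ZMod k) := by
      rw [gk_xlast_pow, toAdd_ofAdd]
    have hgAB : toAdd (gk n k (xlast n ^ (j : ℕ) * FreeGroup.of (Fin.castSucc i)))
        = ((j : ℕ) : ZMod k) + 1 := by
      rw [MonoidHom.map_mul, toAdd_mul, hgA, gk_of, toAdd_ofAdd]
    have hgP : toAdd (gk n k (xlast n ^ ((j : ℕ) + 1))) = ((j : ℕ) : ZMod k) + 1 := by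
      rw [gk_xlast_pow, toAdd_ofAdd]; push_cast; ring
    rw [Phi_left_mul, Phi_left_mul, Phi_left_inv, hgA, hgAB, hgP,
      left_xlast_pow n k (j : ℕ) j.isLt.le, if_neg j.isLt.ne, one_mul, zero_add, zero_add,
      sub_self, left_xlast_pow n k ((j : ℕ) + 1) hj1, Phi_of]
    show fgen n k (Fin.castSucc i) ((j : ℕ) : ZMod k) * _ = _
    have hi : ((Fin.castSucc i : Fin (n + 1)) : ℕ) < n := by simpa using i.isLt
    simp only [fgen, dif_pos hi]
    have hpair : (some (⟨((Fin.castSucc i : Fin (n + 1)) : ℕ), hi⟩,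
        ⟨(((j : ℕ) : ZMod k)).val, ZMod.val_lt _⟩) : Option (Fin n × Fin k)) = some (i, j) := by
      congr 1
      refine Prod.ext (Fin.ext rfl) (Fin.ext ?_)
      exact ZMod.val_cast_of_lt j.isLt
    rw [hpair]
    have hiff : (((j : ℕ) : ZMod k) = -1) ↔ ((j : ℕ) + 1 = k) := cast_eq_neg_one_iff k j.isLt
    by_cases hc : ((j : ℕ) : ZMod k) = -1
    · rw [if_pos hc, if_pos (hiff.mp hc), mul_inv_cancel_right]
    · rw [if_neg hc, if_neg fun hh => hc (hiff.mpr hh), mul_one, inv_one, mul_one]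

lemma rho_comp_phiK : (rho n k).comp (phiK n k) = MonoidHom.id (FH n k) :=
  FreeGroup.ext_hom _ _ fun o => rho_phiK_of n k o

lemma phiK_comp_rho : (phiK n k).comp (rho n k) = MonoidHom.id _ :=
  MonoidHom.ext fun w => phiK_rho n k w

def eqK : FH n k ≃* MonoidHom.ker (gk n k) :=
  MonoidHom.toMulEquiv (phiK n k) (rho n k) (rho_comp_phiK n k) (phiK_comp_rho n k)

lemma phiK_surj : Function.Surjective (phiK n k) := fun w => ⟨rho n k w, phiK_rho n k w⟩

end wreath

lemma finRange_prod {M : Type*} [Monoid M] (G : ℕ → M) (m : ℕ) :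
    ((List.finRange m).map fun j : Fin m => G (j : ℕ)).prod
      = ((List.range m).map G).prod := by
  induction m with
  | zero => simp
  | succ m ih =>
    rw [List.finRange_succ_last, List.range_succ, List.map_append, List.map_append,
      List.prod_append, List.prod_append, List.map_map]
    have h : ((fun j : Fin (m + 1) => G (j : ℕ)) ∘ Fin.castSucc) = fun j : Fin m => G (j : ℕ) := by
      funext j; simp
    rw [h, ih]
    simp

lemma range_prod_tau (i : Fin n) (m : ℕ) :
    ((List.range m).map fun j => (tau n)^[j] (yy n i)).prod =
      FreeGroup.of i.castSucc ^ m * (xlast n ^ m)⁻¹ := by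
  induction m with
  | zero => simp
  | succ m ih =>
    rw [List.range_succ, List.map_append, List.prod_append, ih]
    simp only [List.map_cons, List.map_nil, List.prod_cons, List.prod_nil, mul_one]
    rw [tau_iter]
    group

section wreath2
variable [NeZero k]
set_option linter.unusedSectionVars false

lemma phi_relator (i : Fin n) :
    phi n k (((List.finRange k).map fun j => FreeGroup.of (some (i, j))).prod) =
      FreeGroup.of i.castSucc ^ k * (xlast n ^ k)⁻¹ := by
  rw [map_list_prod, List.map_map]
  have h : (⇑(phi n k) ∘ fun j => FreeGroup.of (some (i, j)))
      = fun j : Fin k => (tau n)^[(j : ℕ)] (yy n i) := by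
    funext j; exact phi_of_some n k i j
  rw [h, finRange_prod (fun m => (tau n)^[m] (yy n i)) k, range_prod_tau]

def MM : Subgroup (MonoidHom.ker (gk n k)) :=
  Subgroup.normalClosure ((phiK n k) '' quotRels n k)

def MM' : Subgroup (FreeGroup (Fin (n + 1))) :=
  (MM n k).map (MonoidHom.ker (gk n k)).subtype

lemma mem_MM'_of {z : MonoidHom.ker (gk n k)} (hz : z ∈ MM n k) :
    (z : FreeGroup (Fin (n + 1))) ∈ MM' n k := ⟨z, hz, rfl⟩

lemma conj_mem_MM' {v z : FreeGroup (Fin (n + 1))} (hv : v ∈ MonoidHom.ker (gk n k))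
    (hz : z ∈ MM' n k) : v * z * v⁻¹ ∈ MM' n k := by
  obtain ⟨m, hm, rfl⟩ := hz
  exact ⟨⟨v, hv⟩ * m * ⟨v, hv⟩⁻¹,
    Subgroup.normalClosure_normal.conj_mem m hm ⟨v, hv⟩, rfl⟩

lemma tk_mem_MM' : xlast n ^ k ∈ MM' n k := by
  have h1 : phiK n k (FreeGroup.of none) ∈ MM n k :=
    Subgroup.subset_normalClosure ⟨FreeGroup.of none, Set.mem_union_left _ rfl, rfl⟩
  have h2 := mem_MM'_of n k h1
  rwa [phiK_coe, phi_of_none] at h2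

lemma ri_mem_MM' (i : Fin n) :
    FreeGroup.of i.castSucc ^ k * (xlast n ^ k)⁻¹ ∈ MM' n k := by
  have h1 : phiK n k (((List.finRange k).map fun j => FreeGroup.of (some (i, j))).prod)
      ∈ MM n k :=
    Subgroup.subset_normalClosure ⟨_, Set.mem_union_right _ ⟨i, rfl⟩, rfl⟩
  have h2 := mem_MM'_of n k h1
  rwa [phiK_coe, phi_relator] at h2

lemma MM'_eq_closure : MM' n k = Subgroup.closure
    ((MonoidHom.ker (gk n k)).subtype ''
      (Group.conjugatesOfSet ((phiK n k) '' quotRels n k))) := by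
  have h : MM' n k = (Subgroup.closure
      (Group.conjugatesOfSet ((phiK n k) '' quotRels n k))).map
        (MonoidHom.ker (gk n k)).subtype := rfl
  rw [h, MonoidHom.map_closure]

lemma tau_mul (x y : FreeGroup (Fin (n + 1))) : tau n (x * y) = tau n x * tau n y := by
  rw [tau, tau, tau]; group

lemma tau_tk : tau n (xlast n ^ k) = xlast n ^ k := by
  rw [tau]; group

lemma tau_mem_MM' {z : FreeGroup (Fin (n + 1))} (hz : z ∈ MM' n k) :
    tau n z ∈ MM' n k := by
  have hle : MM' n k ≤ (MM' n k).comap (MulAut.conj (xlast n)).toMonoidHom := by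
    conv_lhs => rw [MM'_eq_closure]
    refine (Subgroup.closure_le _).mpr ?_
    rintro _ ⟨c, hc, rfl⟩
    rw [Group.mem_conjugatesOfSet_iff] at hc
    obtain ⟨a, haS, hconj⟩ := hc
    obtain ⟨v, hv⟩ := isConj_iff.mp hconj
    have hval : ((MonoidHom.ker (gk n k)).subtype c : FreeGroup (Fin (n + 1)))
        = v.1 * a.1 * v.1⁻¹ := by rw [← hv]; rfl
    have hmem : (MulAut.conj (xlast n)).toMonoidHom ((MonoidHom.ker (gk n k)).subtype c)
        = tau n (v.1 * a.1 * v.1⁻¹) := by rw [hval]; rfl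
    refine Subgroup.mem_comap.mpr ?_
    rw [hmem, tau_mul, tau_mul]
    have hvk : tau n v.1 ∈ MonoidHom.ker (gk n k) := by
      rw [MonoidHom.mem_ker, gk_tau]; exact v.2
    have htauinv : tau n (v.1⁻¹) = (tau n v.1)⁻¹ := by rw [tau, tau]; group
    rw [htauinv]
    refine conj_mem_MM' n k hvk ?_
    -- tau n a.1 ∈ MM'
    obtain ⟨r, hr, rfl⟩ := haS
    rcases hr with hr | ⟨i, rfl⟩
    · rw [Set.eq_of_mem_singleton hr, phiK_coe, phi_of_none, tau_tk]
      exact tk_mem_MM' n k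
    · rw [phiK_coe, phi_relator]
      have key : tau n (FreeGroup.of i.castSucc ^ k * (xlast n ^ k)⁻¹)
          = ((yy n i)⁻¹ * (FreeGroup.of i.castSucc ^ k * (xlast n ^ k)⁻¹ * xlast n ^ k)
              * ((yy n i)⁻¹)⁻¹) * (xlast n ^ k)⁻¹ := by
        rw [tau, yy]; group
      rw [key]
      have hy : (yy n i)⁻¹ ∈ MonoidHom.ker (gk n k) := by
        rw [MonoidHom.mem_ker, MonoidHom.map_inv, gk_yy, inv_one]
      exact mul_mem
        (conj_mem_MM' n k hy (mul_mem (ri_mem_MM' n k i) (tk_mem_MM' n k)))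
        (inv_mem (tk_mem_MM' n k))
  exact hle hz

lemma conj_pow_mem (i : Fin (n + 1)) (m : ℕ) :
    xlast n ^ m * FreeGroup.of i ^ k * (xlast n ^ m)⁻¹ ∈ MM' n k := by
  induction m with
  | zero =>
    simp only [pow_zero, inv_one, one_mul, mul_one]
    by_cases hi : (i : ℕ) < n
    · have hc : (Fin.castSucc ⟨(i : ℕ), hi⟩ : Fin (n + 1)) = i := Fin.ext rfl
      have h := mul_mem (ri_mem_MM' n k ⟨(i : ℕ), hi⟩) (tk_mem_MM' n k)
      rwa [hc, inv_mul_cancel_right] at h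
    · have hxl : i = Fin.last n := by
        refine Fin.ext ?_
        have := i.isLt
        simp only [Fin.val_last]
        omega
      rw [hxl]
      exact tk_mem_MM' n k
  | succ m ih =>
    have h : xlast n ^ (m + 1) * FreeGroup.of i ^ k * (xlast n ^ (m + 1))⁻¹
        = tau n (xlast n ^ m * FreeGroup.of i ^ k * (xlast n ^ m)⁻¹) := by
      rw [tau]; group
    rw [h]
    exact tau_mem_MM' n k ih

lemma N_le_MM' : NF n k ≤ MM' n k := by
  have hrfl : NF n k = Subgroup.closure
      (Group.conjugatesOfSet {w | ∃ i : Fin (n + 1), w = FreeGroup.of i ^ k}) := rfl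
  rw [hrfl]
  refine (Subgroup.closure_le _).mpr ?_
  intro c hc
  rw [Group.mem_conjugatesOfSet_iff] at hc
  obtain ⟨a, ⟨i, rfl⟩, hconj⟩ := hc
  obtain ⟨u, hu⟩ := isConj_iff.mp hconj
  rw [← hu]
  have hv : u * (xlast n ^ (toAdd (gk n k u)).val)⁻¹ ∈ MonoidHom.ker (gk n k) := by
    rw [MonoidHom.mem_ker, MonoidHom.map_mul, MonoidHom.map_inv, gk_xlast_pow, val_cast,
      ofAdd_toAdd, mul_inv_cancel]
  have key : u * FreeGroup.of i ^ k * u⁻¹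
      = (u * (xlast n ^ (toAdd (gk n k u)).val)⁻¹) *
          (xlast n ^ (toAdd (gk n k u)).val * FreeGroup.of i ^ k *
            (xlast n ^ (toAdd (gk n k u)).val)⁻¹) *
          (u * (xlast n ^ (toAdd (gk n k u)).val)⁻¹)⁻¹ := by group
  rw [key]
  exact conj_mem_MM' n k hv (conj_pow_mem n k i _)

lemma MM_eq : MM n k = (NF n k).subgroupOf (MonoidHom.ker (gk n k)) := by
  refine le_antisymm ?_ ?_
  · refine Subgroup.normalClosure_le_normal ?_
    rintro _ ⟨r, hr, rfl⟩
    rw [SetLike.mem_coe, Subgroup.mem_subgroupOf]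
    show phi n k r ∈ NF n k
    rcases hr with hr | ⟨i, rfl⟩
    · rw [Set.eq_of_mem_singleton hr, phi_of_none]
      exact Subgroup.subset_normalClosure ⟨Fin.last n, rfl⟩
    · rw [phi_relator]
      exact mul_mem (Subgroup.subset_normalClosure ⟨i.castSucc, rfl⟩)
        (inv_mem (Subgroup.subset_normalClosure ⟨Fin.last n, rfl⟩))
  · intro w hw
    rw [Subgroup.mem_subgroupOf] at hw
    obtain ⟨m, hm, hmv⟩ := Subgroup.mem_map.mp (N_le_MM' n k hw)
    have h : m = w := Subtype.ext hmv
    rwa [h] at hm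

end wreath2

/-! ### Tietze transformations: the presented group is free of rank `n * k'` -/

section tietze
variable (k' : ℕ)

def PiL (i : Fin n) : FreeGroup (Fin n × Fin k') :=
  ((List.finRange k').map fun j : Fin k' => FreeGroup.of (i, j)).prod

def Gof (i : Fin n) (m : ℕ) : FreeGroup (Fin n × Fin k') :=
  if h : m < k' then FreeGroup.of (i, ⟨m, h⟩) else 1

def Gdel (i : Fin n) (m : ℕ) : FreeGroup (Fin n × Fin k') :=
  if h : m < k' then FreeGroup.of (i, ⟨m, h⟩) else (PiL n k' i)⁻¹

lemma PiL_eq (i : Fin n) : PiL n k' i = ((List.range k').map (Gof n k' i)).prod := by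
  rw [PiL, ← finRange_prod (Gof n k' i) k']
  congr 1
  refine List.map_congr_left fun j _ => ?_
  rw [Gof, dif_pos j.isLt, Fin.eta]

def fdel : Option (Fin n × Fin (k' + 1)) → FreeGroup (Fin n × Fin k')
  | none => 1
  | some (i, j) => if h : (j : ℕ) < k' then FreeGroup.of (i, ⟨(j : ℕ), h⟩) else (PiL n k' i)⁻¹

lemma fdel_some (i : Fin n) (j : Fin (k' + 1)) :
    fdel n k' (some (i, j)) = Gdel n k' i (j : ℕ) := rfl

lemma fdel_rel (r : FreeGroup (Option (Fin n × Fin (k' + 1)))) (hr : r ∈ quotRels n (k' + 1)) :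
    FreeGroup.lift (fdel n k') r = 1 := by
  rcases hr with hr | ⟨i, rfl⟩
  · rw [Set.eq_of_mem_singleton hr, FreeGroup.lift_apply_of]
    rfl
  · rw [map_list_prod, List.map_map]
    have h : (⇑(FreeGroup.lift (fdel n k')) ∘ fun j : Fin (k' + 1) => FreeGroup.of (some (i, j)))
        = fun j : Fin (k' + 1) => Gdel n k' i (j : ℕ) := by
      funext j
      rw [Function.comp_apply, FreeGroup.lift_apply_of, fdel_some]
    rw [h, finRange_prod (Gdel n k' i) (k' + 1), List.range_succ, List.map_append,
      List.prod_append]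
    have h2 : (List.range k').map (Gdel n k' i) = (List.range k').map (Gof n k' i) :=
      List.map_congr_left fun m hm => by
        rw [Gdel, Gof, dif_pos (List.mem_range.mp hm), dif_pos (List.mem_range.mp hm)]
    rw [h2, ← PiL_eq]
    simp only [List.map_cons, List.map_nil, List.prod_cons, List.prod_nil, mul_one]
    rw [Gdel, dif_neg (lt_irrefl k')]
    exact mul_inv_cancel _

def eps : FreeGroup (Fin n × Fin k') →* PresentedGroup (quotRels n (k' + 1)) :=
  FreeGroup.lift fun p => PresentedGroup.of (some (p.1, p.2.castSucc))

def del : PresentedGroup (quotRels n (k' + 1)) →* FreeGroup (Fin n × Fin k') :=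
  PresentedGroup.toGroup (fdel_rel n k')

lemma of_none_eq_one :
    (PresentedGroup.of none : PresentedGroup (quotRels n (k' + 1))) = 1 := by
  refine (QuotientGroup.eq_one_iff _).mpr ?_
  exact Subgroup.subset_normalClosure (Set.mem_union_left _ rfl)

lemma rel_eq_one (i : Fin n) :
    ((List.finRange (k' + 1)).map fun j : Fin (k' + 1) =>
      (PresentedGroup.of (some (i, j)) : PresentedGroup (quotRels n (k' + 1)))).prod = 1 := by
  have h1 : (QuotientGroup.mk' (Subgroup.normalClosure (quotRels n (k' + 1))))
      (((List.finRange (k' + 1)).map fun j : Fin (k' + 1) =>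
        FreeGroup.of (some (i, j))).prod) = 1 :=
    (QuotientGroup.eq_one_iff _).mpr
      (Subgroup.subset_normalClosure (Set.mem_union_right _ ⟨i, rfl⟩))
  rw [map_list_prod, List.map_map] at h1
  have h2 : (⇑(QuotientGroup.mk' (Subgroup.normalClosure (quotRels n (k' + 1)))) ∘
      fun j : Fin (k' + 1) => FreeGroup.of (some (i, j)))
      = fun j : Fin (k' + 1) =>
        (PresentedGroup.of (some (i, j)) : PresentedGroup (quotRels n (k' + 1))) := by
    funext j; rfl
  rwa [h2] at h1

lemma of_last_eq (i : Fin n) :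
    (PresentedGroup.of (some (i, Fin.last k')) : PresentedGroup (quotRels n (k' + 1)))
      = (((List.finRange k').map fun j : Fin k' =>
          (PresentedGroup.of (some (i, j.castSucc)) :
            PresentedGroup (quotRels n (k' + 1)))).prod)⁻¹ := by
  have h1 := rel_eq_one n k' i
  rw [List.finRange_succ_last, List.map_append, List.prod_append, List.map_map] at h1
  simp only [List.map_cons, List.map_nil, List.prod_cons, List.prod_nil, mul_one,
    Function.comp_def] at h1
  exact eq_inv_of_mul_eq_one_right h1

lemma del_comp_eps : (del n k').comp (eps n k') = MonoidHom.id _ := by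
  refine FreeGroup.ext_hom _ _ fun p => ?_
  rw [MonoidHom.comp_apply, MonoidHom.id_apply, eps, FreeGroup.lift_apply_of]
  simp only [del]
  rw [PresentedGroup.toGroup.of, fdel_some, Gdel,
    dif_pos (show ((p.2.castSucc : Fin (k' + 1)) : ℕ) < k' from p.2.isLt)]
  exact congrArg FreeGroup.of (Prod.ext rfl (Fin.ext rfl))

lemma eps_comp_del : (eps n k').comp (del n k') = MonoidHom.id _ := by
  refine PresentedGroup.ext fun x => ?_
  rw [MonoidHom.comp_apply, MonoidHom.id_apply]
  simp only [del]
  rw [PresentedGroup.toGroup.of]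
  rcases x with _ | ⟨i, j⟩
  · rw [show fdel n k' none = 1 from rfl, MonoidHom.map_one]
    exact (of_none_eq_one n k').symm
  · rw [fdel_some, Gdel]
    by_cases h : (j : ℕ) < k'
    · rw [dif_pos h, eps, FreeGroup.lift_apply_of]
      refine congrArg PresentedGroup.of (congrArg some (Prod.ext rfl (Fin.ext rfl)))
    · have hj : j = Fin.last k' := by
        refine Fin.ext ?_
        have := j.isLt
        simp only [Fin.val_last]
        omega
      rw [dif_neg h, MonoidHom.map_inv, hj]
      have h2 : (⇑(FreeGroup.lift fun p : Fin n × Fin k' =>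
          (PresentedGroup.of (some (p.1, p.2.castSucc)) :
            PresentedGroup (quotRels n (k' + 1)))) ∘ fun j : Fin k' => FreeGroup.of (i, j))
          = fun j : Fin k' =>
            (PresentedGroup.of (some (i, j.castSucc)) :
              PresentedGroup (quotRels n (k' + 1))) := by
        funext j'
        rw [Function.comp_apply, FreeGroup.lift_apply_of]
      rw [eps, PiL, map_list_prod, List.map_map, h2]
      exact (of_last_eq n k' i).symm

def epsIso : FreeGroup (Fin n × Fin k') ≃* PresentedGroup (quotRels n (k' + 1)) :=
  MonoidHom.toMulEquiv (eps n k') (del n k') (del_comp_eps n k') (eps_comp_del n k')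

lemma epsIso_of (p : Fin n × Fin k') :
    epsIso n k' (FreeGroup.of p) = PresentedGroup.of (some (p.1, p.2.castSucc)) := by
  show eps n k' (FreeGroup.of p) = _
  rw [eps, FreeGroup.lift_apply_of]

end tietze

end RS16

/-- the normal closure of `{x_i^k}` lies in `ker g_k`, and the
quotient of `ker g_k` by it admits the presentation
`⟨x_{n+1}^k, τ^j(y_i) | x_{n+1}^k, y_i τ(y_i)⋯τ^{k-1}(y_i)⟩`, which is free of
rank `n(k-1)` on the generators `τ^j(y_i)`, `0 ≤ j ≤ k-2`. -/
theorem quotient_presentation (n k : ℕ) (hk : 0 < k) :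
    NF n k ≤ MonoidHom.ker (gk n k) ∧
    (∃ e : PresentedGroup (quotRels n k) ≃*
        (MonoidHom.ker (gk n k) ⧸ (NF n k).subgroupOf (MonoidHom.ker (gk n k))),
      (∀ w : MonoidHom.ker (gk n k), (w : FreeGroup (Fin (n + 1))) = (xlast n) ^ k →
        e (PresentedGroup.of none) = QuotientGroup.mk w) ∧
      ∀ (i : Fin n) (j : Fin k) (w : MonoidHom.ker (gk n k)),
        (w : FreeGroup (Fin (n + 1))) = (tau n)^[(j : ℕ)] (yy n i) →
          e (PresentedGroup.of (some (i, j))) = QuotientGroup.mk w) ∧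
    ∃ e' : FreeGroup (Fin n × Fin (k - 1)) ≃*
        (MonoidHom.ker (gk n k) ⧸ (NF n k).subgroupOf (MonoidHom.ker (gk n k))),
      ∀ (i : Fin n) (j : Fin (k - 1)) (w : MonoidHom.ker (gk n k)),
        (w : FreeGroup (Fin (n + 1))) = (tau n)^[(j : ℕ)] (yy n i) →
          e' (FreeGroup.of (i, j)) = QuotientGroup.mk w := by
  obtain ⟨k', rfl⟩ : ∃ k', k = k' + 1 := ⟨k - 1, (Nat.succ_pred_eq_of_pos hk).symm⟩
  set K := k' + 1 with hK
  have part1 : NF n K ≤ MonoidHom.ker (gk n K) := by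
    refine Subgroup.normalClosure_le_normal ?_
    rintro _ ⟨i, rfl⟩
    rw [SetLike.mem_coe, MonoidHom.mem_ker, RS16.gk_of_pow, ZMod.natCast_self]
    rfl
  have hcoe : ((RS16.eqK n K : RS16.FH n K ≃* _) : RS16.FH n K →* MonoidHom.ker (gk n K))
      = RS16.phiK n K := MonoidHom.ext fun x => rfl
  have hmap : (Subgroup.normalClosure (quotRels n K)).map
      ((RS16.eqK n K : RS16.FH n K ≃* _) : RS16.FH n K →* MonoidHom.ker (gk n K))
      = (NF n K).subgroupOf (MonoidHom.ker (gk n K)) := by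
    rw [hcoe, Subgroup.map_normalClosure _ _ (RS16.phiK_surj n K)]
    exact RS16.MM_eq n K
  let e : PresentedGroup (quotRels n K) ≃*
      (MonoidHom.ker (gk n K) ⧸ (NF n K).subgroupOf (MonoidHom.ker (gk n K))) :=
    QuotientGroup.congr (Subgroup.normalClosure (quotRels n K))
      ((NF n K).subgroupOf (MonoidHom.ker (gk n K))) (RS16.eqK n K) hmap
  have he : ∀ x : Option (Fin n × Fin K), e (PresentedGroup.of x)
      = QuotientGroup.mk (RS16.phiK n K (FreeGroup.of x)) := fun x =>
    QuotientGroup.congr_mk _ _ _ _ _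
  refine ⟨part1, ⟨e, ?_, ?_⟩, ⟨(RS16.epsIso n k').trans e, ?_⟩⟩
  · intro w hw
    rw [he none]
    congr 1
    refine Subtype.ext ?_
    rw [hw, RS16.phiK_coe, RS16.phi_of_none]
  · intro i j w hw
    rw [he (some (i, j))]
    congr 1
    refine Subtype.ext ?_
    rw [hw, RS16.phiK_coe, RS16.phi_of_some]
  · intro i j w hw
    show e ((RS16.epsIso n k') (FreeGroup.of ((i, j) : Fin n × Fin k'))) = QuotientGroup.mk w
    rw [RS16.epsIso_of, he]
    congr 1
    refine Subtype.ext ?_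
    rw [hw, RS16.phiK_coe, RS16.phi_of_some]
    rfl
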